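/- Completeness of typing: for every closed simply typed lambda-term M of sort o over the signature {a : o → o, b : o → o → o, e : o}, there exists a flag f ∈ {pr, np} such that ⊢ M : (f, r) is derivable in the deterministic type system. -/

import Mathlib

namespace STLC

inductive Ty : Type
  | o : Ty
  | arrow : Ty → Ty → Ty

/-- Intersection types refining sorts, with productivity flags
(`true` = `pr`, `false` = `np`):
`𝒯^o = {r}` and `𝒯^{α→β} = 𝒫({pr,np} × 𝒯^α) × 𝒯^β` (finite subsets). -/
def ITy : Ty → Type
  | .o => PUnit
  | .arrow α β => Finset (Bool × ITy α) × ITy β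

noncomputable instance ITy.deq (α : Ty) : DecidableEq (ITy α) := Classical.decEq _
noncomputable instance (α : Ty) : DecidableEq (Bool × ITy α) := Classical.decEq _

def ITy.base : ITy .o := PUnit.unit

def ITy.arr {α β : Ty} (T : Finset (Bool × ITy α)) (τ : ITy β) : ITy (.arrow α β) :=
  (T, τ)

/-- Intrinsically simply-typed lambda-terms in de Bruijn representation,
over the signature `a : o → o`, `b : o → o → o`, `e : o`. -/
inductive Tm : List Ty → Ty → Type
  | var {Γ} (i : Fin Γ.length) : Tm Γ (Γ.get i)
  | ca {Γ} : Tm Γ (.arrow .o .o)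
  | cb {Γ} : Tm Γ (.arrow .o (.arrow .o .o))
  | ce {Γ} : Tm Γ .o
  | lam {Γ γ δ} (K : Tm (γ :: Γ) δ) : Tm Γ (.arrow γ δ)
  | app {Γ γ δ} (K : Tm Γ (.arrow γ δ)) (L : Tm Γ γ) : Tm Γ δ

/-- A type environment: to each variable of the context it assigns a finite set
of (flag, type) pairs (possibly several bindings per variable). -/
def Env (Γ : List Ty) := ∀ i : Fin Γ.length, Finset (Bool × ITy (Γ.get i))

/-- The empty type environment. -/
def Env.empty {Γ : List Ty} : Env Γ := fun _ => ∅

/-- The environment with the single binding `xᵢ : (f, τ)`. -/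
noncomputable def Env.single {Γ : List Ty} (i : Fin Γ.length)
    (p : Bool × ITy (Γ.get i)) : Env Γ :=
  fun j => if h : i = j then {h ▸ p} else ∅

/-- Extending an environment with the set of bindings for a fresh variable. -/
def Env.cons {Γ : List Ty} {γ : Ty} (T : Finset (Bool × ITy γ)) (E : Env Γ) :
    Env (γ :: Γ) := fun j =>
  match j with
  | ⟨0, _⟩ => T
  | ⟨i + 1, h⟩ => E ⟨i, Nat.lt_of_succ_lt_succ h⟩

/-- `|Γ↾pr|`: the number of productive bindings in an environment. -/
noncomputable def Env.prSize {Γ : List Ty} (E : Env Γ) : ℕ :=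
  ∑ i : Fin Γ.length, ((E i).filter (fun p => p.1 = true)).card

/-- The union `Γ ∪ ⋃_{i ∈ I} Γᵢ` of the environments of an application node. -/
noncomputable def Env.appUnion {Γ : List Ty} {ι : Type} [Fintype ι]
    (E₀ : Env Γ) (Es : ι → Env Γ) : Env Γ :=
  fun i => E₀ i ∪ Finset.univ.biUnion (fun p => Es p i)

/-- Derivations in the deterministic intersection type system of Section 3.
`Der E M f τ` derives the judgment `E ⊢ M : (f, τ)`
(`f = true` means the flag `pr`, `f = false` means `np`). -/
inductive Der : ∀ {Γ : List Ty} {α : Ty}, Env Γ → Tm Γ α → Bool → ITy α → Type where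
  | ca {Γ : List Ty} (f : Bool) :
      Der (Γ := Γ) Env.empty .ca true (ITy.arr {(f, ITy.base)} ITy.base)
  | cb {Γ : List Ty} (f₁ f₂ : Bool) :
      Der (Γ := Γ) Env.empty .cb false
        (ITy.arr {(f₁, ITy.base)} (ITy.arr {(f₂, ITy.base)} ITy.base))
  | ce {Γ : List Ty} :
      Der (Γ := Γ) Env.empty .ce false ITy.base
  | var {Γ : List Ty} (i : Fin Γ.length) (f : Bool) (τ : ITy (Γ.get i)) :
      Der (Env.single i (f, τ)) (.var i) false τ
  | lam {Γ : List Ty} {γ δ : Ty} {K : Tm (γ :: Γ) δ} {E : Env Γ}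
      {T : Finset (Bool × ITy γ)} {f : Bool} {τ : ITy δ} :
      Der (Env.cons T E) K f τ →
      Der E (.lam K) f (ITy.arr T τ)
  | app {Γ : List Ty} {γ δ : Ty} {K : Tm Γ (.arrow γ δ)} {L : Tm Γ γ}
      {T : Finset (Bool × ITy γ)} {τ : ITy δ} {f' : Bool} {E₀ : Env Γ}
      (dK : Der E₀ K f' (ITy.arr T τ))
      (fo : {p // p ∈ T} → Bool) (Es : {p // p ∈ T} → Env Γ)
      (dL : ∀ p : {p // p ∈ T}, Der (Es p) L (fo p) p.1.2)
      (hb : ∀ p : {p // p ∈ T}, p.1.1 = (fo p || decide (0 < (Es p).prSize)))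
      (f : Bool)
      (hf : f = true ↔
        (f' = true ∨ (∃ p, fo p = true) ∨
          Env.prSize (Env.appUnion E₀ Es) < E₀.prSize + ∑ p : {p // p ∈ T}, (Es p).prSize)) :
      Der (Env.appUnion E₀ Es) (.app K L) f τ

/-- The value of a derivation: the sum over all nodes of the node values
(`1` at `a`-nodes, the number of duplicated productive bindings at application
nodes, `0` elsewhere). -/
noncomputable def Der.val :
    ∀ {Γ : List Ty} {α : Ty} {E : Env Γ} {M : Tm Γ α} {f : Bool} {τ : ITy α},
      Der E M f τ → ℕ
  | _, _, _, _, _, _, .ca _ => 1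
  | _, _, _, _, _, _, .cb _ _ => 0
  | _, _, _, _, _, _, .ce => 0
  | _, _, _, _, _, _, .var _ _ _ => 0
  | _, _, _, _, _, _, .lam d => d.val
  | _, _, _, _, _, _, .app (E₀ := E₀) dK fo Es dL _ _ _ =>
      (E₀.prSize + (∑ p, (Es p).prSize) - Env.prSize (Env.appUnion E₀ Es))
        + dK.val + ∑ p, (dL p).val

/-! ### Auxiliary development for completeness -/

/-- productive cardinality of a binding set -/
noncomputable def prCard {γ : Ty} (T : Finset (Bool × ITy γ)) : ℕ :=
  (T.filter (fun p => p.1 = true)).card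

lemma Env.prSize_empty {Γ : List Ty} : (Env.empty (Γ := Γ)).prSize = 0 := by
  simp [Env.prSize, Env.empty]

lemma prCard_pos_iff {γ : Ty} (T : Finset (Bool × ITy γ)) :
    0 < prCard T ↔ ∃ p ∈ T, p.1 = true := by
  simp [prCard, Finset.card_pos, Finset.filter_nonempty_iff]

lemma Env.prSize_pos_iff {Γ : List Ty} (E : Env Γ) :
    0 < E.prSize ↔ ∃ i, ∃ p ∈ E i, p.1 = true := by
  simp only [Env.prSize]
  rw [Nat.pos_iff_ne_zero, Ne, Finset.sum_eq_zero_iff]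
  push_neg
  constructor
  · rintro ⟨i, -, hi⟩
    obtain ⟨p, hp⟩ := Finset.card_ne_zero.mp hi
    rw [Finset.mem_filter] at hp
    exact ⟨i, p, hp.1, hp.2⟩
  · rintro ⟨i, p, hp, hflag⟩
    exact ⟨i, Finset.mem_univ i,
      Finset.card_ne_zero.mpr ⟨p, Finset.mem_filter.mpr ⟨hp, hflag⟩⟩⟩

lemma Env.prSize_mono {Γ : List Ty} {E E' : Env Γ} (h : ∀ i, E i ⊆ E' i) :
    E.prSize ≤ E'.prSize := by
  apply Finset.sum_le_sum
  intro i _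
  exact Finset.card_le_card (Finset.filter_subset_filter _ (h i))

lemma Env.subset_appUnion_left {Γ : List Ty} {ι : Type} [Fintype ι]
    (E₀ : Env Γ) (Es : ι → Env Γ) (i : Fin Γ.length) :
    E₀ i ⊆ Env.appUnion E₀ Es i := by
  intro p hp; simp [Env.appUnion]; exact Or.inl hp

lemma Env.subset_appUnion_right {Γ : List Ty} {ι : Type} [Fintype ι]
    (E₀ : Env Γ) (Es : ι → Env Γ) (q : ι) (i : Fin Γ.length) :
    Es q i ⊆ Env.appUnion E₀ Es i := by
  intro p hp; simp [Env.appUnion]; exact Or.inr ⟨q, hp⟩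

lemma Env.mem_appUnion {Γ : List Ty} {ι : Type} [Fintype ι]
    {E₀ : Env Γ} {Es : ι → Env Γ} {i : Fin Γ.length} {p} (hp : p ∈ Env.appUnion E₀ Es i) :
    p ∈ E₀ i ∨ ∃ q, p ∈ Es q i := by
  simpa [Env.appUnion] using hp

lemma Env.prSize_cons {Γ : List Ty} {γ : Ty} (Eb : Env (γ :: Γ)) :
    Eb.prSize = prCard (Eb ⟨0, Nat.succ_pos _⟩) + Env.prSize (fun i => Eb i.succ) := by
  simp only [Env.prSize, List.length_cons]
  rw [Fin.sum_univ_succ]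
  congr 1

lemma Env.prSize_single {Γ : List Ty} (i : Fin Γ.length) (p : Bool × ITy (Γ.get i)) :
    (Env.single i p).prSize = if p.1 = true then 1 else 0 := by
  simp only [Env.prSize, Env.single]
  rw [Finset.sum_eq_single i]
  · rw [dif_pos rfl]
    by_cases h : p.1 = true <;> simp [Finset.filter_singleton, h]
  · intro j _ hj
    rw [dif_neg (fun h => hj h.symm)]
    simp
  · simp

lemma Env.cons_eta {Γ : List Ty} {γ : Ty} (Eb : Env (γ :: Γ)) :
    Env.cons (Eb ⟨0, Nat.succ_pos _⟩) (fun i => Eb i.succ) = Eb := by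
  funext j
  match j with
  | ⟨0, h⟩ => rfl
  | ⟨i + 1, h⟩ => rfl

/-- Semantic values and demands, by mutual recursion on sorts. -/
def SD : Ty → Type × Type
  | .o => (Bool, PUnit)
  | .arrow α β =>
      (((SD α).1 → (SD β).1) ×
        ((SD α).1 → (SD β).2 → Bool × Finset (Bool × ITy α)),
       (SD α).1 × (SD β).2)

abbrev SemV (α : Ty) : Type := (SD α).1
abbrev Dm (α : Ty) : Type := (SD α).2

/-- The (flag, type) answer of a value to a demand. -/
noncomputable def ansTy : ∀ α : Ty, SemV α → Dm α → Bool × ITy α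
  | .o, v, _ => (v, PUnit.unit)
  | .arrow α β, v, d =>
      ((v.2 d.1 d.2).1, ITy.arr (v.2 d.1 d.2).2 (ansTy β (v.1 d.1) d.2).2)

/-- default semantic value -/
def dflt : ∀ α : Ty, SemV α
  | .o => false
  | .arrow _ β => (fun _ => dflt β, fun _ _ => (false, ∅))

open Classical in
/-- Goodness of semantic values and of demands. -/
noncomputable def GVD : ∀ α : Ty, (SemV α → Prop) × (Dm α → Prop)
  | .o => (fun _ => True, fun _ => True)
  | .arrow γ β =>
      (fun v => ∀ w, (GVD γ).1 w → (GVD β).1 (v.1 w) ∧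
        ∀ d, (GVD β).2 d →
          ((∀ p ∈ (v.2 w d).2, ∃ d', (GVD γ).2 d' ∧ p = ansTy γ w d') ∧
           ((ansTy β (v.1 w) d).1 =
             ((v.2 w d).1 || decide (∃ p ∈ (v.2 w d).2, p.1 = true)))),
       fun d => (GVD γ).1 d.1 ∧ (GVD β).2 d.2)

abbrev GoodV (α : Ty) (v : SemV α) : Prop := (GVD α).1 v
abbrev GoodD (α : Ty) (d : Dm α) : Prop := (GVD α).2 d

/-- Semantic environments. -/
def EnvV (Γ : List Ty) := ∀ i : Fin Γ.length, SemV (Γ.get i)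

def EnvV.cons {Γ : List Ty} {γ : Ty} (w : SemV γ) (ρ : EnvV Γ) : EnvV (γ :: Γ) :=
  fun j => match j with
  | ⟨0, _⟩ => w
  | ⟨i + 1, h⟩ => ρ ⟨i, Nat.lt_of_succ_lt_succ h⟩

/-- The data produced for one demand: a derivation with controlled flag and
environment. -/
structure CRes {Γ : List Ty} (ρ : EnvV Γ) {α : Ty} (v : SemV α) (M : Tm Γ α)
    (d : Dm α) : Type where
  f : Bool
  E : Env Γ
  hpr : (ansTy α v d).1 = (f || decide (0 < E.prSize))
  henv : ∀ i, ∀ p ∈ E i, ∃ d', GoodD _ d' ∧ p = ansTy _ (ρ i) d'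
  der : Der E M f (ansTy α v d).2

def CC {Γ : List Ty} (ρ : EnvV Γ) {α : Ty} (v : SemV α) (M : Tm Γ α) : Type :=
  ∀ d : Dm α, GoodD α d → CRes ρ v M d

/-- The logical relation. -/
def RelT {Γ : List Ty} (ρ : EnvV Γ) : ∀ α : Ty, SemV α → Tm Γ α → Type
  | .o, v, M => CC ρ v M
  | .arrow γ δ, v, M =>
      CC ρ v M ×
      (∀ (w : SemV γ) (L : Tm Γ γ), GoodV γ w → RelT ρ γ w L →
        RelT ρ δ (v.1 w) (.app M L))

def getC {Γ : List Ty} {ρ : EnvV Γ} : ∀ {α : Ty} {v : SemV α} {M : Tm Γ α},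
    RelT ρ α v M → CC ρ v M
  | .o, _, _, r => r
  | .arrow _ _, _, _, r => r.1

open Classical in
lemma keyFlag {Γ : List Ty} {ι : Type} [Fintype ι] (E₀ : Env Γ) (Es : ι → Env Γ)
    (f' : Bool) (fo : ι → Bool) :
    ((f' || decide (0 < E₀.prSize)) ||
        decide (∃ p, (fo p || decide (0 < (Es p).prSize)) = true))
      = ((f' || decide (∃ p, fo p = true) ||
          decide (Env.prSize (Env.appUnion E₀ Es) < E₀.prSize + ∑ p, (Es p).prSize)) ||
          decide (0 < Env.prSize (Env.appUnion E₀ Es))) := by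
  have mono1 : E₀.prSize ≤ Env.prSize (Env.appUnion E₀ Es) :=
    Env.prSize_mono (fun i => Env.subset_appUnion_left E₀ Es i)
  have mono2 : ∀ q, (Es q).prSize ≤ Env.prSize (Env.appUnion E₀ Es) :=
    fun q => Env.prSize_mono (fun i => Env.subset_appUnion_right E₀ Es q i)
  rw [Bool.eq_iff_iff]
  simp only [Bool.or_eq_true, decide_eq_true_eq]
  constructor
  · rintro ((hf | h0) | ⟨p, hp | hp⟩)
    · exact Or.inl (Or.inl (Or.inl hf))
    · exact Or.inr (lt_of_lt_of_le h0 mono1)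
    · exact Or.inl (Or.inl (Or.inr ⟨p, hp⟩))
    · exact Or.inr (lt_of_lt_of_le hp (mono2 p))
  · rintro (((hf | ⟨p, hp⟩) | hlt) | h0)
    · exact Or.inl (Or.inl hf)
    · exact Or.inr ⟨p, Or.inl hp⟩
    · by_cases hs : ∃ q, 0 < (Es q).prSize
      · obtain ⟨q, hq⟩ := hs
        exact Or.inr ⟨q, Or.inr hq⟩
      · push_neg at hs
        have hz : (∑ p, (Es p).prSize) = 0 :=
          Finset.sum_eq_zero (fun p _ => Nat.eq_zero_of_le_zero (hs p))
        rw [hz, Nat.add_zero] at hlt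
        exact absurd (lt_of_le_of_lt mono1 hlt) (lt_irrefl _)
    · obtain ⟨i, q, hq, hflag⟩ := (Env.prSize_pos_iff _).mp h0
      rcases Env.mem_appUnion hq with hq0 | ⟨r, hqr⟩
      · exact Or.inl (Or.inr ((Env.prSize_pos_iff _).mpr ⟨i, q, hq0, hflag⟩))
      · exact Or.inr ⟨r, Or.inr ((Env.prSize_pos_iff _).mpr ⟨i, q, hqr, hflag⟩)⟩

open Classical in
/-- The `C`-part for an application node. -/
noncomputable def appC {Γ : List Ty} {ρ : EnvV Γ} {γ β : Ty}
    (v : SemV (.arrow γ β)) (M : Tm Γ (.arrow γ β))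
    (hG : GoodV _ v) (hC : CC ρ v M) (w : SemV γ) (L : Tm Γ γ)
    (hGw : GoodV γ w) (hCL : CC ρ w L) : CC ρ (v.1 w) (.app M L) := fun d hd => by
  obtain ⟨f', E₀, hpr₀, henv₀, dK⟩ := hC (w, d) ⟨hGw, hd⟩
  have hans := (hG w hGw).2 d hd
  set T := (v.2 w d).2 with hT
  let dp : {p // p ∈ T} → Dm γ := fun p => Classical.choose (hans.1 p.1 p.2)
  have hdp : ∀ p : {p // p ∈ T}, GoodD γ (dp p) ∧ (p : Bool × ITy γ) = ansTy γ w (dp p) :=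
    fun p => Classical.choose_spec (hans.1 p.1 p.2)
  let cres : ∀ p : {p // p ∈ T}, CRes ρ w L (dp p) := fun p => hCL (dp p) (hdp p).1
  have hty : ∀ p : {p // p ∈ T}, (ansTy γ w (dp p)).2 = (p : Bool × ITy γ).2 :=
    fun p => by rw [(hdp p).2]
  have hb : ∀ p : {p // p ∈ T},
      (p : Bool × ITy γ).1 = ((cres p).f || decide (0 < Env.prSize ((cres p).E))) :=
    fun p => by rw [(hdp p).2]; exact (cres p).hpr
  refine ⟨f' || decide (∃ p : {p // p ∈ T}, (cres p).f = true) ||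
      decide (Env.prSize (Env.appUnion E₀ (fun p => (cres p).E)) <
        E₀.prSize + ∑ p : {p // p ∈ T}, ((cres p).E).prSize),
    Env.appUnion E₀ (fun p => (cres p).E), ?_, ?_, ?_⟩
  · -- flag promise
    have hcoh : (ansTy β (v.1 w) d).1 = ((v.2 w d).1 || decide (∃ p ∈ T, p.1 = true)) :=
      hans.2
    have hpr₀' : (v.2 w d).1 = (f' || decide (0 < E₀.prSize)) := hpr₀
    rw [hcoh, hpr₀']
    have hiff : (∃ p ∈ T, p.1 = true) ↔
        (∃ p : {p // p ∈ T}, ((cres p).f || decide (0 < Env.prSize ((cres p).E))) = true) := by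
      constructor
      · rintro ⟨p, hp, hflag⟩
        exact ⟨⟨p, hp⟩, by rw [← hb ⟨p, hp⟩]; exact hflag⟩
      · rintro ⟨p, h⟩
        exact ⟨p.1, p.2, by rw [hb p]; exact h⟩
    rw [decide_eq_decide.mpr hiff]
    exact keyFlag E₀ (fun p => (cres p).E) f' (fun p => (cres p).f)
  · -- environment condition
    intro i p hp
    rcases Env.mem_appUnion hp with h0 | ⟨q, hq⟩
    · exact henv₀ i p h0
    · exact (cres q).henv i p hq
  · -- the derivation
    refine Der.app (T := T) (τ := (ansTy β (v.1 w) d).2) dK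
      (fun p => (cres p).f) (fun p => (cres p).E)
      (fun p => (hty p) ▸ (cres p).der) (fun p => hb p) _ ?_
    simp only [Bool.or_eq_true, decide_eq_true_eq, or_assoc]

open Classical in
noncomputable def appLem {Γ : List Ty} {ρ : EnvV Γ} :
    ∀ {γ β : Ty} (v : SemV (.arrow γ β)) (M : Tm Γ (.arrow γ β)),
      GoodV _ v → CC ρ v M → ∀ (w : SemV γ) (L : Tm Γ γ),
      GoodV γ w → RelT ρ γ w L → RelT ρ β (v.1 w) (.app M L)
  | _, .o, v, M, hG, hC, w, L, hGw, hL => appC v M hG hC w L hGw (getC hL)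
  | _, .arrow _ _, v, M, hG, hC, w, L, hGw, hL =>
      ⟨appC v M hG hC w L hGw (getC hL),
       fun w' L' hGw' hL' =>
         appLem (v.1 w) (.app M L) ((hG w hGw).1)
           (appC v M hG hC w L hGw (getC hL)) w' L' hGw' hL'⟩

/-- Packaged result of the fundamental lemma. -/
structure Fund {Γ : List Ty} (ρ : EnvV Γ) {α : Ty} (M : Tm Γ α) : Type where
  v : SemV α
  good : GoodV α v
  rel : RelT ρ α v M

noncomputable def mkRel : ∀ {Γ : List Ty} {ρ : EnvV Γ} {α : Ty} {v : SemV α}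
    {M : Tm Γ α}, GoodV α v → CC ρ v M → RelT ρ α v M
  | _, _, .o, _, _, _, hC => hC
  | _, _, .arrow _ _, v, M, hG, hC =>
      ⟨hC, fun w L hGw hL => appLem v M hG hC w L hGw hL⟩

lemma goodCons {Γ : List Ty} {γ : Ty} {w : SemV γ} {ρ : EnvV Γ} (hw : GoodV γ w)
    (hρ : ∀ i, GoodV _ (ρ i)) : ∀ j, GoodV _ (EnvV.cons w ρ j)
  | ⟨0, _⟩ => hw
  | ⟨i + 1, h⟩ => hρ ⟨i, Nat.lt_of_succ_lt_succ h⟩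

noncomputable def caV : SemV (.arrow .o .o) :=
  (fun _ => true, fun w _ => (true, {(w, PUnit.unit)}))

lemma caV_good : GoodV _ caV := by
  intro w hw
  refine ⟨trivial, fun d hd => ⟨?_, ?_⟩⟩
  · intro p hp
    simp only [caV, Finset.mem_singleton] at hp
    exact ⟨PUnit.unit, trivial, Finset.mem_singleton.mp hp⟩
  · simp [caV, ansTy]

noncomputable def cbV : SemV (.arrow .o (.arrow .o .o)) :=
  (fun w1 => (fun w2 => w1 || w2, fun w2 _ => (w1, {(w2, PUnit.unit)})),
   fun w1 _ => (false, {(w1, PUnit.unit)}))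

lemma keyS (b : Bool) [Decidable (∃ p ∈ ({(b, PUnit.unit)} : Finset (Bool × ITy .o)), p.1 = true)] :
    decide (∃ p ∈ ({(b, PUnit.unit)} : Finset (Bool × ITy .o)), p.1 = true) = b := by
  cases b <;> simp only [decide_eq_true_eq, decide_eq_false_iff_not, not_exists, not_and] <;>
    first | exact ⟨_, Finset.mem_singleton_self _, rfl⟩ | (intro p hp; rw [Finset.mem_singleton.mp hp]; simp)

lemma cbV_good : GoodV _ cbV := by
  intro w1 hw1
  constructor
  · intro w2 hw2
    refine ⟨trivial, fun d hd => ⟨?_, ?_⟩⟩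
    · intro p hp
      simp only [cbV, Finset.mem_singleton] at hp
      exact ⟨PUnit.unit, trivial, Finset.mem_singleton.mp hp⟩
    · cases w2 <;> simp [cbV, ansTy] <;> exact congrArg _ (keyS _).symm
  · intro d hd
    refine ⟨?_, ?_⟩
    · intro p hp
      simp only [cbV, Finset.mem_singleton] at hp
      exact ⟨PUnit.unit, trivial, Finset.mem_singleton.mp hp⟩
    · cases w1 <;> simp [cbV, ansTy] <;> exact keyS _

open Classical in
/-- The fundamental lemma. -/
noncomputable def fund : ∀ {Γ : List Ty} {α : Ty} (M : Tm Γ α) (ρ : EnvV Γ),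
    (∀ i, GoodV _ (ρ i)) → Fund ρ M
  | _, _, .var i, ρ, hρ =>
      { v := ρ i
        good := hρ i
        rel := mkRel (hρ i) (fun d hd =>
          { f := false
            E := Env.single i (ansTy _ (ρ i) d)
            hpr := by
              rw [Env.prSize_single]
              cases h : (ansTy _ (ρ i) d).1 <;> simp [h]
            henv := by
              intro j p hp
              by_cases h : i = j
              · subst h
                rw [show Env.single i (ansTy _ (ρ i) d) i = {ansTy _ (ρ i) d} from
                  dif_pos rfl, Finset.mem_singleton] at hp
                exact ⟨d, hd, hp⟩
              · rw [show Env.single i (ansTy _ (ρ i) d) j = ∅ from dif_neg h] at hp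
                exact absurd hp (Finset.notMem_empty p)
            der := Der.var i (ansTy _ (ρ i) d).1 (ansTy _ (ρ i) d).2 }) }
  | _, _, .ce, ρ, hρ =>
      { v := (false : Bool)
        good := trivial
        rel := mkRel trivial (fun d hd =>
          { f := false
            E := Env.empty
            hpr := by simp [ansTy, Env.prSize_empty]
            henv := fun i p hp => absurd hp (Finset.notMem_empty p)
            der := Der.ce }) }
  | _, _, .ca, ρ, hρ =>
      { v := caV
        good := caV_good
        rel := mkRel caV_good (fun d hd =>
          { f := true
            E := Env.empty
            hpr := by simp [ansTy, caV]
            henv := fun i p hp => absurd hp (Finset.notMem_empty p)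
            der := Der.ca d.1 }) }
  | _, _, .cb, ρ, hρ =>
      { v := cbV
        good := cbV_good
        rel := mkRel cbV_good (fun d hd =>
          { f := false
            E := Env.empty
            hpr := by simp [ansTy, cbV, Env.prSize_empty]
            henv := fun i p hp => absurd hp (Finset.notMem_empty p)
            der := Der.cb d.1 d.2.1 }) }
  | _, _, .app K L, ρ, hρ =>
      let rK := fund K ρ hρ
      let rL := fund L ρ hρ
      { v := rK.v.1 rL.v
        good := (rK.good rL.v rL.good).1
        rel := rK.rel.2 rL.v L rL.good rL.rel }
  | Γ, _, .lam (γ := γ) (δ := δ) K, ρ, hρ =>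
      let F : ∀ w : SemV γ, GoodV γ w → Fund (EnvV.cons w ρ) K :=
        fun w hw => fund K (EnvV.cons w ρ) (goodCons hw hρ)
      let v : SemV (.arrow γ δ) :=
        (fun w => if h : GoodV γ w then (F w h).v else dflt δ,
         fun w d =>
           if h : GoodV γ w ∧ GoodD δ d then
             ((getC (F w h.1).rel d h.2).f ||
                decide (0 < Env.prSize (fun i => (getC (F w h.1).rel d h.2).E i.succ)),
              (getC (F w h.1).rel d h.2).E ⟨0, Nat.succ_pos _⟩)
           else (false, ∅))
      have hv1 : ∀ w (hw : GoodV γ w), v.1 w = (F w hw).v := fun w hw => dif_pos hw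
      have hv2 : ∀ w d (hw : GoodV γ w) (hd : GoodD δ d),
          v.2 w d = ((getC (F w hw).rel d hd).f ||
              decide (0 < Env.prSize (fun i => (getC (F w hw).rel d hd).E i.succ)),
            (getC (F w hw).rel d hd).E ⟨0, Nat.succ_pos _⟩) :=
        fun w d hw hd => dif_pos ⟨hw, hd⟩
      have good : GoodV (.arrow γ δ) v := by
        intro w hw
        constructor
        · rw [hv1 w hw]; exact (F w hw).good
        · intro d hd
          have h2a : (v.2 w d).1 = ((getC (F w hw).rel d hd).f ||
              decide (0 < Env.prSize (fun i => (getC (F w hw).rel d hd).E i.succ))) := by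
            rw [hv2 w d hw hd]
          have h2b : (v.2 w d).2 = (getC (F w hw).rel d hd).E ⟨0, Nat.succ_pos _⟩ := by
            rw [hv2 w d hw hd]
          constructor
          · intro p hp
            rw [h2b] at hp
            exact (getC (F w hw).rel d hd).henv ⟨0, Nat.succ_pos _⟩ p hp
          · rw [hv1 w hw, h2a, h2b, (getC (F w hw).rel d hd).hpr, Bool.eq_iff_iff]
            simp only [Bool.or_eq_true, decide_eq_true_eq,
              Env.prSize_cons ((getC (F w hw).rel d hd).E), ← prCard_pos_iff]
            by_cases hf : (getC (F w hw).rel d hd).f = true <;> simp [hf] <;> omega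
      { v := v
        good := good
        rel := mkRel good (fun d hd => by
          have h2a : (v.2 d.1 d.2).1 = ((getC (F d.1 hd.1).rel d.2 hd.2).f ||
              decide (0 < Env.prSize (fun i => (getC (F d.1 hd.1).rel d.2 hd.2).E i.succ))) := by
            rw [hv2 d.1 d.2 hd.1 hd.2]
          have h2b : (v.2 d.1 d.2).2 = (getC (F d.1 hd.1).rel d.2 hd.2).E ⟨0, Nat.succ_pos _⟩ := by
            rw [hv2 d.1 d.2 hd.1 hd.2]
          refine { f := (getC (F d.1 hd.1).rel d.2 hd.2).f
                   E := fun i => (getC (F d.1 hd.1).rel d.2 hd.2).E i.succ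
                   hpr := ?_, henv := ?_, der := ?_ }
          · show (v.2 d.1 d.2).1 = _
            rw [h2a]
          · intro i p hp
            exact (getC (F d.1 hd.1).rel d.2 hd.2).henv i.succ p hp
          · show Der _ _ _ (ITy.arr (v.2 d.1 d.2).2 (ansTy δ (v.1 d.1) d.2).2)
            rw [hv1 d.1 hd.1, h2b]
            exact Der.lam (by
              rw [Env.cons_eta]
              exact (getC (F d.1 hd.1).rel d.2 hd.2).der)) }

/-- Completeness of typing (Condition (D2)): every closed lambda-term of
sort `o` has a derivable type `⊢ M : (f, r)` for some flag `f ∈ {pr, np}`. -/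
theorem typing_completeness (M : Tm [] .o) :
    ∃ f : Bool, Nonempty (Der Env.empty M f ITy.base) := by
  have r := fund M (fun i => i.elim0) (fun i => i.elim0)
  have c := getC r.rel PUnit.unit trivial
  have hE : c.E = Env.empty := funext fun i => i.elim0
  refine ⟨c.f, ⟨?_⟩⟩
  rw [← hE]
  exact c.der

end STLC
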